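/- Let n, d ≥ 1, let B and σ₁, …, σ_d be real n×n matrices, and let b̂ : ℝⁿ → ℝⁿ and σ̂ : ℝⁿ → ℝ^{n×d} satisfy lim_{|x|→∞} (|b̂(x)| + ‖σ̂(x)‖)/|x| = 0. Define b(x) = B x + b̂(x) and let σ(x) be the n×d matrix whose j-th column is σ_j x plus the j-th column of σ̂(x). Set a = Σ_{j=1}^d σ_jᵀ σ_j, and for x ≠ 0 define G(x) = xᵀ b(x)/|x|² + trace(σ(x)ᵀ σ(x))/(2|x|²) − |σ(x)ᵀ x|²/|x|⁴. Then for every ε > 0 there exists R > 0 such that for all x with |x| ≥ R, G(x) ≤ Λ_B + Λ_a/2 − Σ_{j=1}^d ρ_{σ_j}² + ε. -/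
import Mathlib


open Matrix

/-- The largest eigenvalue `Λ_M` of `(M + Mᵀ)/2`, equivalently `sup_{|u|=1} uᵀ M u`. -/
noncomputable def lamMax {n : ℕ} (M : Matrix (Fin n) (Fin n) ℝ) : ℝ :=
  sSup {r : ℝ | ∃ u : Fin n → ℝ, Real.sqrt (u ⬝ᵥ u) = 1 ∧ r = u ⬝ᵥ M *ᵥ u}

/-- `ρ_M = inf_{|u|=1} |uᵀ M u|`. -/
noncomputable def rhoMin {n : ℕ} (M : Matrix (Fin n) (Fin n) ℝ) : ℝ :=
  sInf {r : ℝ | ∃ u : Fin n → ℝ, Real.sqrt (u ⬝ᵥ u) = 1 ∧ r = |u ⬝ᵥ M *ᵥ u|}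

lemma dot_self_nonneg {n : ℕ} (x : Fin n → ℝ) : 0 ≤ x ⬝ᵥ x :=
  Finset.sum_nonneg fun _ _ => mul_self_nonneg _

noncomputable def CF {n : ℕ} (M : Matrix (Fin n) (Fin n) ℝ) : ℝ := ∑ i, ∑ j, (M i j)^2

lemma abs_dot_le {n : ℕ} (x y : Fin n → ℝ) :
    |x ⬝ᵥ y| ≤ Real.sqrt (x ⬝ᵥ x) * Real.sqrt (y ⬝ᵥ y) := by
  rw [← Real.sqrt_mul_self (abs_nonneg (x ⬝ᵥ y)), ← Real.sqrt_mul (dot_self_nonneg x)]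
  apply Real.sqrt_le_sqrt
  rw [abs_mul_abs_self]
  calc (x ⬝ᵥ y) * (x ⬝ᵥ y) = (∑ i, x i * y i)^2 := by rw [sq]; rfl
    _ ≤ (∑ i, x i ^ 2) * (∑ i, y i ^ 2) := Finset.sum_mul_sq_le_sq_mul_sq Finset.univ x y
    _ = (x ⬝ᵥ x) * (y ⬝ᵥ y) := by simp [dotProduct, sq]

lemma mulVec_dot_le {n : ℕ} (M : Matrix (Fin n) (Fin n) ℝ) (x : Fin n → ℝ) :
    (M *ᵥ x) ⬝ᵥ (M *ᵥ x) ≤ CF M * (x ⬝ᵥ x) := by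
  unfold CF
  rw [Finset.sum_mul]
  refine Finset.sum_le_sum fun i _ => ?_
  calc (M *ᵥ x) i * (M *ᵥ x) i = (∑ j, M i j * x j)^2 := by rw [sq]; rfl
    _ ≤ (∑ j, M i j ^ 2) * (∑ j, x j ^ 2) := Finset.sum_mul_sq_le_sq_mul_sq Finset.univ (M i) x
    _ = (∑ j, M i j ^ 2) * (x ⬝ᵥ x) := by simp [dotProduct, sq]

lemma sqrt_mulVec_le {n : ℕ} (M : Matrix (Fin n) (Fin n) ℝ) (x : Fin n → ℝ) :
    Real.sqrt ((M *ᵥ x) ⬝ᵥ (M *ᵥ x)) ≤ Real.sqrt (CF M) * Real.sqrt (x ⬝ᵥ x) := by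
  have hCF : 0 ≤ CF M := Finset.sum_nonneg fun _ _ => Finset.sum_nonneg fun _ _ => sq_nonneg _
  rw [← Real.sqrt_mul hCF]
  exact Real.sqrt_le_sqrt (mulVec_dot_le M x)

lemma abs_quad_le {n : ℕ} (M : Matrix (Fin n) (Fin n) ℝ) (x : Fin n → ℝ) :
    |x ⬝ᵥ M *ᵥ x| ≤ Real.sqrt (CF M) * (x ⬝ᵥ x) := by
  calc |x ⬝ᵥ M *ᵥ x| ≤ Real.sqrt (x ⬝ᵥ x) * Real.sqrt ((M *ᵥ x) ⬝ᵥ (M *ᵥ x)) := abs_dot_le _ _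
    _ ≤ Real.sqrt (x ⬝ᵥ x) * (Real.sqrt (CF M) * Real.sqrt (x ⬝ᵥ x)) :=
        mul_le_mul_of_nonneg_left (sqrt_mulVec_le M x) (Real.sqrt_nonneg _)
    _ = Real.sqrt (CF M) * (x ⬝ᵥ x) := by
        rw [mul_left_comm, Real.mul_self_sqrt (dot_self_nonneg x)]

lemma unit_mem {n : ℕ} (x : Fin n → ℝ) (hx : 0 < x ⬝ᵥ x) :
    let u := (Real.sqrt (x ⬝ᵥ x))⁻¹ • x
    Real.sqrt (u ⬝ᵥ u) = 1 ∧ ∀ M : Matrix (Fin n) (Fin n) ℝ,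
      u ⬝ᵥ M *ᵥ u = (x ⬝ᵥ M *ᵥ x) / (x ⬝ᵥ x) := by
  intro u
  have hs : Real.sqrt (x ⬝ᵥ x) > 0 := Real.sqrt_pos.mpr hx
  have hss : Real.sqrt (x ⬝ᵥ x) * Real.sqrt (x ⬝ᵥ x) = x ⬝ᵥ x :=
    Real.mul_self_sqrt hx.le
  constructor
  · have : u ⬝ᵥ u = 1 := by
      show ((Real.sqrt (x ⬝ᵥ x))⁻¹ • x) ⬝ᵥ ((Real.sqrt (x ⬝ᵥ x))⁻¹ • x) = 1
      rw [smul_dotProduct, dotProduct_smul, smul_eq_mul, smul_eq_mul, ← mul_assoc,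
        ← mul_inv, hss]
      field_simp
    rw [this, Real.sqrt_one]
  · intro M
    show ((Real.sqrt (x ⬝ᵥ x))⁻¹ • x) ⬝ᵥ M *ᵥ ((Real.sqrt (x ⬝ᵥ x))⁻¹ • x) = _
    rw [mulVec_smul, smul_dotProduct, dotProduct_smul, smul_eq_mul, smul_eq_mul, ← mul_assoc,
      ← mul_inv, hss]
    field_simp [mul_comm]

lemma quad_le_lamMax {n : ℕ} (M : Matrix (Fin n) (Fin n) ℝ) (x : Fin n → ℝ) (hx : 0 < x ⬝ᵥ x) :
    x ⬝ᵥ M *ᵥ x ≤ lamMax M * (x ⬝ᵥ x) := by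
  obtain ⟨hu1, hu2⟩ := unit_mem x hx
  have hbdd : BddAbove {r : ℝ | ∃ u : Fin n → ℝ, Real.sqrt (u ⬝ᵥ u) = 1 ∧ r = u ⬝ᵥ M *ᵥ u} := by
    refine ⟨Real.sqrt (CF M), fun r hr => ?_⟩
    obtain ⟨u, hu, rfl⟩ := hr
    have huu : u ⬝ᵥ u = 1 := by
      have := congrArg (· ^ 2) hu
      simpa [Real.sq_sqrt (dot_self_nonneg u)] using this
    calc u ⬝ᵥ M *ᵥ u ≤ |u ⬝ᵥ M *ᵥ u| := le_abs_self _
      _ ≤ Real.sqrt (CF M) * (u ⬝ᵥ u) := abs_quad_le M u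
      _ = Real.sqrt (CF M) := by rw [huu, mul_one]
  have hmem : (x ⬝ᵥ M *ᵥ x) / (x ⬝ᵥ x) ≤ lamMax M :=
    le_csSup hbdd ⟨_, hu1, (hu2 M).symm⟩
  calc x ⬝ᵥ M *ᵥ x = (x ⬝ᵥ M *ᵥ x) / (x ⬝ᵥ x) * (x ⬝ᵥ x) := by field_simp
    _ ≤ lamMax M * (x ⬝ᵥ x) := mul_le_mul_of_nonneg_right hmem hx.le

lemma rhoMin_nonneg {n : ℕ} (M : Matrix (Fin n) (Fin n) ℝ) : 0 ≤ rhoMin M :=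
  Real.sInf_nonneg (by rintro r ⟨u, _, rfl⟩; exact abs_nonneg _)

lemma rhoMin_sq_le {n : ℕ} (M : Matrix (Fin n) (Fin n) ℝ) (x : Fin n → ℝ) (hx : 0 < x ⬝ᵥ x) :
    rhoMin M ^ 2 * (x ⬝ᵥ x) ^ 2 ≤ (x ⬝ᵥ M *ᵥ x) ^ 2 := by
  obtain ⟨hu1, hu2⟩ := unit_mem x hx
  have hle : rhoMin M ≤ |x ⬝ᵥ M *ᵥ x| / (x ⬝ᵥ x) := by
    have : rhoMin M ≤ |(x ⬝ᵥ M *ᵥ x) / (x ⬝ᵥ x)| :=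
      csInf_le ⟨0, by rintro r ⟨u, _, rfl⟩; exact abs_nonneg _⟩ ⟨_, hu1, by rw [hu2 M]⟩
    rwa [abs_div, abs_of_pos hx] at this
  have h2 : rhoMin M ^ 2 ≤ (|x ⬝ᵥ M *ᵥ x| / (x ⬝ᵥ x)) ^ 2 :=
    pow_le_pow_left₀ (rhoMin_nonneg M) hle 2
  rw [div_pow, sq_abs] at h2
  calc rhoMin M ^ 2 * (x ⬝ᵥ x) ^ 2 ≤ (x ⬝ᵥ M *ᵥ x) ^ 2 / (x ⬝ᵥ x) ^ 2 * (x ⬝ᵥ x)^2 :=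
        mul_le_mul_of_nonneg_right h2 (by positivity)
    _ = (x ⬝ᵥ M *ᵥ x) ^ 2 := by field_simp

lemma sum_mulVec' {n d : ℕ} (A : Fin d → Matrix (Fin n) (Fin n) ℝ) (x : Fin n → ℝ) :
    (∑ j, A j) *ᵥ x = ∑ j, A j *ᵥ x := by
  ext i
  simp [Matrix.mulVec, dotProduct, Matrix.sum_apply, Finset.sum_mul]
  rw [Finset.sum_comm]

lemma a_identity {n d : ℕ} (σ : Fin d → Matrix (Fin n) (Fin n) ℝ) (x : Fin n → ℝ) :
    x ⬝ᵥ (∑ j, (σ j)ᵀ * σ j) *ᵥ x = ∑ j, (σ j *ᵥ x) ⬝ᵥ (σ j *ᵥ x) := by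
  rw [sum_mulVec']
  rw [show x ⬝ᵥ (∑ j, ((σ j)ᵀ * σ j) *ᵥ x) = ∑ j, x ⬝ᵥ ((σ j)ᵀ * σ j) *ᵥ x from by
    simp [dotProduct, Finset.mul_sum, Finset.sum_apply]; rw [Finset.sum_comm]]
  refine Finset.sum_congr rfl fun j _ => ?_
  rw [← Matrix.mulVec_mulVec, dotProduct_mulVec, vecMul_transpose]

set_option maxHeartbeats 1000000

/-- If the drift `b(x) = Bx + b̂(x)` and the columns of the diffusion matrix
`σ(x)` are `σ_j x + σ̂_j(x)` with `(|b̂(x)| + ‖σ̂(x)‖)/|x| → 0` as `|x| → ∞`, then the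
generator applied to `ln|x|`, namely
`G(x) = xᵀ b(x)/|x|² + trace(σ(x)ᵀ σ(x))/(2|x|²) - |σ(x)ᵀ x|²/|x|⁴`,
satisfies `G(x) ≤ Λ_B + Λ_a/2 - Σ_j ρ_{σ_j}² + ε` for all `|x|` large enough, where
`a = Σ_j σ_jᵀ σ_j`. -/
theorem generator_log_norm_linearizable_bound
    (n d : ℕ) (hn : 1 ≤ n) (hd : 1 ≤ d)
    (B : Matrix (Fin n) (Fin n) ℝ) (σ : Fin d → Matrix (Fin n) (Fin n) ℝ)
    (bhat : (Fin n → ℝ) → (Fin n → ℝ)) (σhat : Fin d → (Fin n → ℝ) → (Fin n → ℝ))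
    (hlim : ∀ ε > (0 : ℝ), ∃ R > (0 : ℝ), ∀ x : Fin n → ℝ, R ≤ Real.sqrt (x ⬝ᵥ x) →
      Real.sqrt (bhat x ⬝ᵥ bhat x) + ∑ j, Real.sqrt (σhat j x ⬝ᵥ σhat j x)
        ≤ ε * Real.sqrt (x ⬝ᵥ x)) :
    ∀ ε > (0 : ℝ), ∃ R > (0 : ℝ), ∀ x : Fin n → ℝ, R ≤ Real.sqrt (x ⬝ᵥ x) →
      (x ⬝ᵥ (B *ᵥ x + bhat x)) / (x ⬝ᵥ x)
        + (∑ j, (σ j *ᵥ x + σhat j x) ⬝ᵥ (σ j *ᵥ x + σhat j x)) / (2 * (x ⬝ᵥ x))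
        - (∑ j, (x ⬝ᵥ (σ j *ᵥ x + σhat j x)) ^ 2) / (x ⬝ᵥ x) ^ 2
      ≤ lamMax B + lamMax (∑ j, (σ j)ᵀ * σ j) / 2 - (∑ j, (rhoMin (σ j)) ^ 2) + ε := by
  intro ε hε
  set c : Fin d → ℝ := fun j => Real.sqrt (CF (σ j)) with hc
  have hcj : ∀ j, 0 ≤ c j := fun j => Real.sqrt_nonneg _
  set Ct : ℝ := ∑ j, c j with hCt
  have hCt0 : 0 ≤ Ct := Finset.sum_nonneg fun j _ => hcj j
  set K : ℝ := 1 + 3 * Ct + d / 2 with hK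
  have hK0 : 0 < K := by positivity
  set ε' : ℝ := min 1 (ε / K) with hε'
  have hε'0 : 0 < ε' := lt_min one_pos (by positivity)
  have hε'1 : ε' ≤ 1 := min_le_left _ _
  have hε'K : ε' * K ≤ ε := by
    calc ε' * K ≤ (ε / K) * K := mul_le_mul_of_nonneg_right (min_le_right _ _) hK0.le
      _ = ε := by field_simp
  obtain ⟨R₀, hR₀, hR⟩ := hlim ε' hε'0
  clear_value K ε'
  refine ⟨max R₀ 1, lt_of_lt_of_le one_pos (le_max_right _ _), fun x hx => ?_⟩
  set s : ℝ := Real.sqrt (x ⬝ᵥ x) with hsdef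
  have hs1 : 1 ≤ s := le_trans (le_max_right _ _) hx
  have hsR : R₀ ≤ s := le_trans (le_max_left _ _) hx
  have hs0 : 0 < s := lt_of_lt_of_le one_pos hs1
  have hss : s * s = x ⬝ᵥ x := Real.mul_self_sqrt (dot_self_nonneg x)
  have ht : 0 < x ⬝ᵥ x := by nlinarith
  set t : ℝ := x ⬝ᵥ x with htdef
  -- bounds from hlim
  have hsum := hR x hsR
  have hnb : Real.sqrt (bhat x ⬝ᵥ bhat x) ≤ ε' * s := by
    have : (0:ℝ) ≤ ∑ j, Real.sqrt (σhat j x ⬝ᵥ σhat j x) :=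
      Finset.sum_nonneg fun j _ => Real.sqrt_nonneg _
    linarith
  have hnh : ∀ j, Real.sqrt (σhat j x ⬝ᵥ σhat j x) ≤ ε' * s := by
    intro j
    have h1 : Real.sqrt (σhat j x ⬝ᵥ σhat j x) ≤ ∑ k, Real.sqrt (σhat k x ⬝ᵥ σhat k x) :=
      Finset.single_le_sum (f := fun k => Real.sqrt (σhat k x ⬝ᵥ σhat k x))
        (fun k _ => Real.sqrt_nonneg _) (Finset.mem_univ j)
    have h0 : (0:ℝ) ≤ Real.sqrt (bhat x ⬝ᵥ bhat x) := Real.sqrt_nonneg _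
    linarith
  -- (I) drift term
  have hI : x ⬝ᵥ (B *ᵥ x + bhat x) ≤ (lamMax B + ε') * t := by
    rw [dotProduct_add]
    have h1 : x ⬝ᵥ B *ᵥ x ≤ lamMax B * t := quad_le_lamMax B x ht
    have h2 : x ⬝ᵥ bhat x ≤ ε' * t := by
      calc x ⬝ᵥ bhat x ≤ |x ⬝ᵥ bhat x| := le_abs_self _
        _ ≤ s * Real.sqrt (bhat x ⬝ᵥ bhat x) := abs_dot_le _ _
        _ ≤ s * (ε' * s) := mul_le_mul_of_nonneg_left hnb hs0.le
        _ = ε' * t := by rw [← hss]; ring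
    linarith [h1, h2]
  -- per-j helper bounds
  have hcross : ∀ j, |(σ j *ᵥ x) ⬝ᵥ σhat j x| ≤ c j * ε' * t := by
    intro j
    calc |(σ j *ᵥ x) ⬝ᵥ σhat j x|
        ≤ Real.sqrt ((σ j *ᵥ x) ⬝ᵥ (σ j *ᵥ x)) * Real.sqrt (σhat j x ⬝ᵥ σhat j x) :=
          abs_dot_le _ _
      _ ≤ (c j * s) * (ε' * s) := by
          apply mul_le_mul (sqrt_mulVec_le (σ j) x) (hnh j) (Real.sqrt_nonneg _)
          positivity
      _ = c j * ε' * t := by rw [← hss]; ring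
  have hhh : ∀ j, σhat j x ⬝ᵥ σhat j x ≤ ε' * t := by
    intro j
    have h1 : Real.sqrt (σhat j x ⬝ᵥ σhat j x) * Real.sqrt (σhat j x ⬝ᵥ σhat j x)
        = σhat j x ⬝ᵥ σhat j x := Real.mul_self_sqrt (dot_self_nonneg _)
    have h2 := hnh j
    have h3 : Real.sqrt (σhat j x ⬝ᵥ σhat j x) ≥ 0 := Real.sqrt_nonneg _
    have h4 : σhat j x ⬝ᵥ σhat j x ≤ (ε' * s) * (ε' * s) := by nlinarith
    calc σhat j x ⬝ᵥ σhat j x ≤ (ε' * s) * (ε' * s) := h4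
      _ = ε' * ε' * t := by rw [← hss]; ring
      _ ≤ 1 * ε' * t := by nlinarith [mul_nonneg (mul_nonneg (sub_nonneg.mpr hε'1) hε'0.le) ht.le]
      _ = ε' * t := by ring
  -- (II) diffusion trace term
  have hII : (∑ j, (σ j *ᵥ x + σhat j x) ⬝ᵥ (σ j *ᵥ x + σhat j x))
      ≤ (lamMax (∑ j, (σ j)ᵀ * σ j) + (2 * Ct + d) * ε') * t := by
    have hexp : ∀ j, (σ j *ᵥ x + σhat j x) ⬝ᵥ (σ j *ᵥ x + σhat j x)
        = (σ j *ᵥ x) ⬝ᵥ (σ j *ᵥ x) + 2 * ((σ j *ᵥ x) ⬝ᵥ σhat j x)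
          + σhat j x ⬝ᵥ σhat j x := by
      intro j
      rw [dotProduct_add, add_dotProduct, add_dotProduct, dotProduct_comm (σhat j x) (σ j *ᵥ x)]
      ring
    have hbound : ∀ j, (σ j *ᵥ x + σhat j x) ⬝ᵥ (σ j *ᵥ x + σhat j x)
        ≤ (σ j *ᵥ x) ⬝ᵥ (σ j *ᵥ x) + 2 * (c j * ε' * t) + ε' * t := by
      intro j
      rw [hexp j]
      have := hcross j
      have := hhh j
      have habs := le_abs_self ((σ j *ᵥ x) ⬝ᵥ σhat j x)
      linarith
    calc (∑ j, (σ j *ᵥ x + σhat j x) ⬝ᵥ (σ j *ᵥ x + σhat j x))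
        ≤ ∑ j, ((σ j *ᵥ x) ⬝ᵥ (σ j *ᵥ x) + 2 * (c j * ε' * t) + ε' * t) :=
          Finset.sum_le_sum fun j _ => hbound j
      _ = (∑ j, (σ j *ᵥ x) ⬝ᵥ (σ j *ᵥ x)) + 2 * Ct * ε' * t + d * (ε' * t) := by
          rw [Finset.sum_add_distrib, Finset.sum_add_distrib]
          have e1 : ∑ j : Fin d, 2 * (c j * ε' * t) = 2 * Ct * ε' * t := by
            calc ∑ j : Fin d, 2 * (c j * ε' * t) = ∑ j : Fin d, c j * (2 * ε' * t) :=
                  Finset.sum_congr rfl fun j _ => by ring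
              _ = Ct * (2 * ε' * t) := by rw [hCt, Finset.sum_mul]
              _ = 2 * Ct * ε' * t := by ring
          have e2 : ∑ _j : Fin d, ε' * t = d * (ε' * t) := by
            rw [Finset.sum_const, Finset.card_univ, Fintype.card_fin, nsmul_eq_mul]
          rw [e1, e2]
      _ ≤ lamMax (∑ j, (σ j)ᵀ * σ j) * t + 2 * Ct * ε' * t + d * (ε' * t) := by
          have := quad_le_lamMax (∑ j, (σ j)ᵀ * σ j) x ht
          rw [a_identity] at this
          linarith
      _ = (lamMax (∑ j, (σ j)ᵀ * σ j) + (2 * Ct + d) * ε') * t := by ring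
  -- (III) the squared term
  have hIII : ((∑ j, (rhoMin (σ j)) ^ 2) - 2 * Ct * ε') * t ^ 2
      ≤ ∑ j, (x ⬝ᵥ (σ j *ᵥ x + σhat j x)) ^ 2 := by
    have hj : ∀ j, rhoMin (σ j) ^ 2 * t ^ 2 - 2 * (c j * ε') * t ^ 2
        ≤ (x ⬝ᵥ (σ j *ᵥ x + σhat j x)) ^ 2 := by
      intro j
      rw [dotProduct_add]
      set p : ℝ := x ⬝ᵥ σ j *ᵥ x with hp
      set q : ℝ := x ⬝ᵥ σhat j x with hq
      have h1 : rhoMin (σ j) ^ 2 * t ^ 2 ≤ p ^ 2 := rhoMin_sq_le (σ j) x ht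
      have h2 : |p| ≤ c j * t := abs_quad_le (σ j) x
      have h3 : |q| ≤ ε' * t := by
        calc |q| ≤ s * Real.sqrt (σhat j x ⬝ᵥ σhat j x) := abs_dot_le _ _
          _ ≤ s * (ε' * s) := mul_le_mul_of_nonneg_left (hnh j) hs0.le
          _ = ε' * t := by rw [← hss]; ring
      have h4 : |p| * |q| ≤ (c j * t) * (ε' * t) :=
        mul_le_mul h2 h3 (abs_nonneg _) (by positivity)
      have h5 : -(|p| * |q|) ≤ p * q := by
        rw [← abs_mul]; exact neg_abs_le _
      have h6 : (p + q) ^ 2 = p ^ 2 + 2 * (p * q) + q ^ 2 := by ring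
      linarith [h1, h4, h5, sq_nonneg q, h6]
    calc ((∑ j, (rhoMin (σ j)) ^ 2) - 2 * Ct * ε') * t ^ 2
        = ∑ j, (rhoMin (σ j) ^ 2 * t ^ 2 - 2 * (c j * ε') * t ^ 2) := by
          rw [Finset.sum_sub_distrib]
          have e0 : ∑ j : Fin d, rhoMin (σ j) ^ 2 * t ^ 2
              = (∑ j : Fin d, rhoMin (σ j) ^ 2) * t ^ 2 :=
            (Finset.sum_mul _ _ _).symm
          rw [e0]
          have e1 : ∑ j : Fin d, 2 * (c j * ε') * t ^ 2 = 2 * Ct * ε' * t ^ 2 := by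
            calc ∑ j : Fin d, 2 * (c j * ε') * t ^ 2 = ∑ j : Fin d, c j * (2 * ε' * t ^ 2) :=
                  Finset.sum_congr rfl fun j _ => by ring
              _ = Ct * (2 * ε' * t ^ 2) := by rw [hCt, Finset.sum_mul]
              _ = 2 * Ct * ε' * t ^ 2 := by ring
          rw [e1]
          ring
      _ ≤ ∑ j, (x ⬝ᵥ (σ j *ᵥ x + σhat j x)) ^ 2 := Finset.sum_le_sum fun j _ => hj j
  -- combine
  have ht2 : (0:ℝ) < t ^ 2 := by positivity
  have hA : (x ⬝ᵥ (B *ᵥ x + bhat x)) / t ≤ lamMax B + ε' := by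
    rw [div_le_iff₀ ht]; linarith
  have hS : (∑ j, (σ j *ᵥ x + σhat j x) ⬝ᵥ (σ j *ᵥ x + σhat j x)) / (2 * t)
      ≤ lamMax (∑ j, (σ j)ᵀ * σ j) / 2 + (Ct + d / 2) * ε' := by
    rw [div_le_iff₀ (by linarith : (0:ℝ) < 2 * t)]
    calc (∑ j, (σ j *ᵥ x + σhat j x) ⬝ᵥ (σ j *ᵥ x + σhat j x))
        ≤ (lamMax (∑ j, (σ j)ᵀ * σ j) + (2 * Ct + d) * ε') * t := hII
      _ = (lamMax (∑ j, (σ j)ᵀ * σ j) / 2 + (Ct + d / 2) * ε') * (2 * t) := by ring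
  have hP : -((∑ j, (x ⬝ᵥ (σ j *ᵥ x + σhat j x)) ^ 2) / t ^ 2)
      ≤ -(∑ j, (rhoMin (σ j)) ^ 2) + 2 * Ct * ε' := by
    have : (∑ j, (rhoMin (σ j)) ^ 2) - 2 * Ct * ε'
        ≤ (∑ j, (x ⬝ᵥ (σ j *ᵥ x + σhat j x)) ^ 2) / t ^ 2 := by
      rw [le_div_iff₀ ht2]; exact hIII
    linarith
  have hfinal : ε' + (Ct + d / 2) * ε' + 2 * Ct * ε' ≤ ε := by
    have heq : ε' + (Ct + d / 2) * ε' + 2 * Ct * ε' = ε' * K := by rw [hK]; ring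
    exact le_trans (le_of_eq heq) hε'K
  linarith [hA, hS, hP, hfinal]
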